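/- Suppose ‖N(δ) + I(δ)‖₂ ≤ C δ^{J+1} for all δ ∈ (0, Δ̄), where I(δ) is invertible with ‖I^{-1}(δ)‖₂ ≤ c/δ for some constant c > 0. Then there exist constants C₁ > 0 and Δ > 0 such that ‖N^{-1}(δ) I(δ) + E_d‖₂ ≤ C₁ δ^J for all δ ∈ (0, Δ). -/

import Mathlib

open scoped Matrix.Norms.L2Operator

lemma l2_norm_one_le {d : ℕ} : ‖(1 : Matrix (Fin d) (Fin d) ℝ)‖ ≤ 1 := by
  rw [Matrix.l2_opNorm_def]
  apply ContinuousLinearMap.opNorm_le_bound _ zero_le_one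
  intro x
  rw [one_mul]
  apply le_of_eq
  congr 1
  simp [Matrix.toEuclideanLin_apply, Matrix.one_mulVec]

/-- If `‖N(δ) + I(δ)‖₂ ≤ C δ^(J+1)` for `δ ∈ (0, Δ̄)`, where `I(δ)` is invertible
with `‖I(δ)⁻¹‖₂ ≤ c/δ`, then there are `C₁ > 0` and `Δ > 0` such that
`‖N(δ)⁻¹ I(δ) + E_d‖₂ ≤ C₁ δ^J` for all `δ ∈ (0, Δ)`. -/
theorem approx_info_inverse_bound {d : ℕ} (N I : ℝ → Matrix (Fin d) (Fin d) ℝ)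
    (J : ℕ) (hJ : 1 ≤ J) (C c Δbar : ℝ) (hc : 0 < c) (hΔbar : 0 < Δbar)
    (hI : ∀ δ ∈ Set.Ioo (0 : ℝ) Δbar, IsUnit (I δ) ∧ ‖(I δ)⁻¹‖ ≤ c / δ)
    (hN : ∀ δ ∈ Set.Ioo (0 : ℝ) Δbar, ‖N δ + I δ‖ ≤ C * δ ^ (J + 1)) :
    ∃ C₁ > (0 : ℝ), ∃ Δ > (0 : ℝ), ∀ δ ∈ Set.Ioo (0 : ℝ) Δ,
      ‖(N δ)⁻¹ * I δ + 1‖ ≤ C₁ * δ ^ J := by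
  classical
  set C' : ℝ := max C 1 with hC'def
  have hC'pos : (0 : ℝ) < C' := lt_of_lt_of_le one_pos (le_max_right _ _)
  refine ⟨2 * (c * C'), by positivity,
    min Δbar (min 1 (1 / (2 * (c * C')))), by positivity, ?_⟩
  rintro δ ⟨hδ0, hδlt⟩
  have hδΔ : δ < Δbar := lt_of_lt_of_le hδlt (min_le_left _ _)
  have hδ1 : δ < 1 := lt_of_lt_of_le hδlt ((min_le_right _ _).trans (min_le_left _ _))
  have hδ2 : δ < 1 / (2 * (c * C')) :=
    lt_of_lt_of_le hδlt ((min_le_right _ _).trans (min_le_right _ _))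
  obtain ⟨hIu, hIinv⟩ := hI δ ⟨hδ0, hδΔ⟩
  have hNb := hN δ ⟨hδ0, hδΔ⟩
  set E : Matrix (Fin d) (Fin d) ℝ := N δ + I δ with hE
  set t : Matrix (Fin d) (Fin d) ℝ := (I δ)⁻¹ * E with ht
  have hpowpos : (0 : ℝ) < δ ^ (J + 1) := pow_pos hδ0 _
  have hEb : ‖E‖ ≤ C' * δ ^ (J + 1) :=
    hNb.trans (mul_le_mul_of_nonneg_right (le_max_left _ _) hpowpos.le)
  have htb : ‖t‖ ≤ c * C' * δ ^ J := by
    calc ‖t‖ ≤ ‖(I δ)⁻¹‖ * ‖E‖ := norm_mul_le _ _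
    _ ≤ (c / δ) * (C' * δ ^ (J + 1)) :=
        mul_le_mul hIinv hEb (norm_nonneg _) (by positivity)
    _ = c * C' * δ ^ J := by
        rw [pow_succ]; field_simp
  have hthalf : ‖t‖ ≤ 1 / 2 := by
    have h1 : δ ^ J ≤ δ ^ 1 := pow_le_pow_of_le_one hδ0.le hδ1.le hJ
    have h2 : c * C' * δ ≤ 1 / 2 := by
      rw [lt_div_iff₀ (by positivity)] at hδ2
      nlinarith
    calc ‖t‖ ≤ c * C' * δ ^ J := htb
    _ ≤ c * C' * δ := by
        have := mul_le_mul_of_nonneg_left h1 (by positivity : (0:ℝ) ≤ c * C')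
        simpa using this
    _ ≤ 1 / 2 := h2
  have htlt1 : ‖t‖ < 1 := lt_of_le_of_lt hthalf (by norm_num)
  have hu1 : IsUnit (1 - t) := (Units.oneSub t htlt1).isUnit
  have hu1det : IsUnit (1 - t).det := (Matrix.isUnit_iff_isUnit_det _).mp hu1
  have hIdet : IsUnit (I δ).det := (Matrix.isUnit_iff_isUnit_det _).mp hIu
  have hII : I δ * (I δ)⁻¹ = 1 := Matrix.mul_nonsing_inv _ hIdet
  have hII' : (I δ)⁻¹ * I δ = 1 := Matrix.nonsing_inv_mul _ hIdet
  have htt : (1 - t)⁻¹ * (1 - t) = 1 := Matrix.nonsing_inv_mul _ hu1det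
  have htt' : (1 - t) * (1 - t)⁻¹ = 1 := Matrix.mul_nonsing_inv _ hu1det
  -- N δ = -(I δ * (1 - t))
  have hNeq : N δ = -(I δ * (1 - t)) := by
    have : I δ * (1 - t) = I δ - E := by
      rw [mul_sub, mul_one, ht, ← mul_assoc, hII, one_mul]
    rw [this, hE]; abel
  -- inverse of N δ
  have hNinv : (N δ)⁻¹ = -((1 - t)⁻¹ * (I δ)⁻¹) := by
    apply Matrix.inv_eq_right_inv
    rw [hNeq, neg_mul_neg, mul_assoc, ← mul_assoc (1 - t), htt', one_mul, hII]
  have hkey : (N δ)⁻¹ * I δ + 1 = -((1 - t)⁻¹ * t) := by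
    have h1 : (N δ)⁻¹ * I δ = -(1 - t)⁻¹ := by
      rw [hNinv, neg_mul, mul_assoc, hII', mul_one]
    have h2 : (1 - t)⁻¹ * t = (1 - t)⁻¹ - 1 := by
      have := htt
      rw [mul_sub, mul_one] at this
      linear_combination (norm := abel) -this
    rw [h1, h2]; abel
  -- norm bounds
  set S : Matrix (Fin d) (Fin d) ℝ := (1 - t)⁻¹ with hS
  have hSid : S = 1 + S * t := by
    have := htt
    rw [mul_sub, mul_one] at this
    linear_combination (norm := abel) this
  have hSb : ‖S‖ ≤ 2 := by
    have h1 : ‖S‖ ≤ 1 + ‖S‖ * ‖t‖ := by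
      calc ‖S‖ = ‖1 + S * t‖ := by rw [← hSid]
      _ ≤ ‖(1 : Matrix (Fin d) (Fin d) ℝ)‖ + ‖S * t‖ := norm_add_le _ _
      _ ≤ 1 + ‖S‖ * ‖t‖ := add_le_add l2_norm_one_le (norm_mul_le _ _)
    nlinarith [norm_nonneg S, norm_nonneg t, mul_le_mul_of_nonneg_left hthalf (norm_nonneg S)]
  calc ‖(N δ)⁻¹ * I δ + 1‖ = ‖S * t‖ := by rw [hkey, norm_neg, hS]
  _ ≤ ‖S‖ * ‖t‖ := norm_mul_le _ _
  _ ≤ 2 * (c * C' * δ ^ J) :=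
      mul_le_mul hSb htb (norm_nonneg _) (by norm_num)
  _ = 2 * (c * C') * δ ^ J := by ring
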